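/- Let p, q ≥ 1 be integers, let B be an antisymmetric p×p integer matrix, let A be an antisymmetric q×q integer matrix, let c ∈ {1,…,p}, and let C be the p×q integer matrix each of whose columns equals the c-th column of B. Then the antisymmetric (p+q)×(p+q) block matrix [[B, C],[−Cᵀ, A]] is equivalent to the block-diagonal matrix [[B, 0],[0, A]]. -/

import Mathlib

open Matrix

/-- Two integer matrices are equivalent if `B = T * A * Tᵀ` for some `T ∈ GL(N, ℤ)`. -/
def MatEquiv {n : Type*} [Fintype n] [DecidableEq n] (A B : Matrix n n ℤ) : Prop :=
  ∃ T : Matrix n n ℤ, IsUnit T.det ∧ B = T * A * Tᵀ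

/-- if `B` (p×p) and `A` (q×q) are antisymmetric integer matrices and
every column of `C` equals the `c`-th column of `B`, then the antisymmetric block
matrix `[[B, C], [-Cᵀ, A]]` is equivalent to `[[B, 0], [0, A]]`. -/
theorem block_split_equiv (p q : ℕ) (hp : 1 ≤ p) (hq : 1 ≤ q)
    (B : Matrix (Fin p) (Fin p) ℤ) (A : Matrix (Fin q) (Fin q) ℤ)
    (hB : Bᵀ = -B) (hA : Aᵀ = -A)
    (c : Fin p) (C : Matrix (Fin p) (Fin q) ℤ) (hC : ∀ i j, C i j = B i c) :
    MatEquiv (Matrix.fromBlocks B C (-Cᵀ) A) (Matrix.fromBlocks B 0 0 A) := by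
  set E : Matrix (Fin p) (Fin q) ℤ := fun i j => if i = c then (1 : ℤ) else 0 with hE
  have hBcc : B c c = 0 := by
    have h := congrFun (congrFun hB c) c
    simp only [transpose_apply, neg_apply] at h
    linarith
  have hCE : C = B * E := by
    ext i j
    simp only [mul_apply]; simp [hE, hC]
  have hCt : Cᵀ = -(Eᵀ * B) := by
    rw [hCE, transpose_mul, hB, Matrix.mul_neg]
  have hEBE : Eᵀ * B * E = 0 := by
    ext j j'
    simp only [mul_apply, transpose_apply]; simp [hE, Finset.mul_sum, hBcc]
  refine ⟨fromBlocks 1 0 (-Eᵀ) 1, ?_, ?_⟩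
  · rw [Matrix.det_fromBlocks_zero₁₂]
    simp
  · rw [Matrix.fromBlocks_transpose, Matrix.transpose_one, Matrix.transpose_zero,
      Matrix.transpose_neg, Matrix.transpose_transpose, Matrix.fromBlocks_multiply,
      Matrix.fromBlocks_multiply]
    simp only [Matrix.one_mul, Matrix.mul_one, Matrix.zero_mul, Matrix.mul_zero,
      add_zero, zero_add]
    have h2 : B * -E + C = 0 := by rw [hCE]; simp [Matrix.mul_neg]
    have h3 : -Eᵀ * B + -Cᵀ = 0 := by rw [hCt, Matrix.neg_mul]; abel
    have h4 : -Eᵀ * C + A = A := by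
      rw [hCE, Matrix.neg_mul, ← Matrix.mul_assoc, hEBE]; simp
    rw [Matrix.transpose_one, Matrix.mul_one, Matrix.mul_one, h2, h3, h4,
      Matrix.zero_mul, zero_add]
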